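/- Let $d \ge 4$, let $\tau \in S_d$, and define $\alpha(j) = j + 1 \pmod d$ and $\beta(j) = d+1-j$ as permutations of $\{1,\ldots,d\}$. For $\tau' = \tau \circ \alpha^k \circ \beta^\ell$ with $0 \le k < d$ and $\ell \in \{0,1\}$, and for any $1 \le j_1 < j_2 < j_3 < j_4 \le d$, the quadruple $(\tau'(j_1), \tau'(j_2), \tau'(j_3), \tau'(j_4))$ is of the correct cyclic order with respect to $\tau$, meaning there exists $s \in \{1,2,3,4\}$ such that, reading subscripts modulo $4$, the values $\tau^{-1}(\tau'(j_s)), \tau^{-1}(\tau'(j_{s+1})), \tau^{-1}(\tau'(j_{s+2})), \tau^{-1}(\tau'(j_{s+3}))$ are strictly increasing or strictly decreasing. -/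

import Mathlib

/-- A quadruple `v` of indices is of the correct cyclic order with respect to `τ`:
some cyclic rotation of the quadruple has strictly monotone values under `τ⁻¹`. -/
def correctOrder4 {d : ℕ} (τ : Equiv.Perm (Fin d)) (v : Fin 4 → Fin d) : Prop :=
  ∃ s : Fin 4, StrictMono (fun a : Fin 4 => τ.symm (v (s + a))) ∨
    StrictAnti (fun a : Fin 4 => τ.symm (v (s + a)))

lemma sm4 {d : ℕ} (f : Fin 4 → Fin d) (h0 : (f 0).val < (f 1).val)
    (h1 : (f 1).val < (f 2).val) (h2 : (f 2).val < (f 3).val) : StrictMono f := by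
  rw [Fin.strictMono_iff_lt_succ]
  intro i
  fin_cases i
  · exact Fin.lt_def.mpr h0
  · exact Fin.lt_def.mpr h1
  · exact Fin.lt_def.mpr h2

lemma sa4 {d : ℕ} (f : Fin 4 → Fin d) (h0 : (f 1).val < (f 0).val)
    (h1 : (f 2).val < (f 1).val) (h2 : (f 3).val < (f 2).val) : StrictAnti f := by
  rw [Fin.strictAnti_iff_succ_lt]
  intro i
  fin_cases i
  · exact Fin.lt_def.mpr h0
  · exact Fin.lt_def.mpr h1
  · exact Fin.lt_def.mpr h2

lemma core (d c : ℕ) (hc : c < d) (n0 n1 n2 n3 : ℕ)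
    (h01 : n0 < n1) (h12 : n1 < n2) (h23 : n2 < n3) (h3 : n3 < d) :
    ((n0+c)%d < (n1+c)%d ∧ (n1+c)%d < (n2+c)%d ∧ (n2+c)%d < (n3+c)%d) ∨
    ((n1+c)%d < (n2+c)%d ∧ (n2+c)%d < (n3+c)%d ∧ (n3+c)%d < (n0+c)%d) ∨
    ((n2+c)%d < (n3+c)%d ∧ (n3+c)%d < (n0+c)%d ∧ (n0+c)%d < (n1+c)%d) ∨
    ((n3+c)%d < (n0+c)%d ∧ (n0+c)%d < (n1+c)%d ∧ (n1+c)%d < (n2+c)%d) := by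
  have key : ∀ m, m < 2*d → m % d = if d ≤ m then m - d else m := by
    intro m hm
    split
    · rw [Nat.mod_eq_sub_mod ‹_›, Nat.mod_eq_of_lt (by omega)]
    · exact Nat.mod_eq_of_lt (by omega)
  have e0 := key (n0+c) (by omega)
  have e1 := key (n1+c) (by omega)
  have e2 := key (n2+c) (by omega)
  have e3 := key (n3+c) (by omega)
  split_ifs at e0 e1 e2 e3 <;> omega

/-- Rotations and reflections of the loop preserve the cyclic order of every quadruple:
if `τ' = τ ∘ αᵏ ∘ βˡ` then every increasing quadruple is mapped by `τ'` to a quadruple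
of the correct cyclic order with respect to `τ`. -/
theorem rotation_reflection_preserves_cyclic_order (d : ℕ) (hd : 4 ≤ d)
    (τ : Equiv.Perm (Fin d)) (k ℓ : ℕ) (hk : k < d) (hℓ : ℓ < 2)
    (τ' : Equiv.Perm (Fin d))
    (hτ' : τ' = τ * (finRotate d) ^ k * (Fin.revPerm : Equiv.Perm (Fin d)) ^ ℓ)
    (j1 j2 j3 j4 : Fin d) (h12 : j1 < j2) (h23 : j2 < j3) (h34 : j3 < j4) :
    correctOrder4 τ ![τ' j1, τ' j2, τ' j3, τ' j4] := by
  obtain ⟨m, rfl⟩ : ∃ m, d = m + 1 := ⟨d - 1, by omega⟩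
  open Fin.NatCast Fin.CommRing in
  have hrot : ∀ (i : Fin (m+1)) (t : ℕ), ((finRotate (m+1))^t) i = i + (t : Fin (m+1)) := by
    intro i t
    induction t with
    | zero => simp
    | succ t ih =>
      rw [pow_succ', Equiv.Perm.mul_apply, ih, finRotate_succ_apply]
      push_cast
      ring
  set σ : Equiv.Perm (Fin (m+1)) :=
    (finRotate (m+1)) ^ k * (Fin.revPerm : Equiv.Perm (Fin (m+1))) ^ ℓ with hσ
  set u : Fin 4 → Fin (m+1) := ![σ j1, σ j2, σ j3, σ j4] with hu
  have hveq : ∀ a : Fin 4, τ.symm (![τ' j1, τ' j2, τ' j3, τ' j4] a) = u a := by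
    intro a
    fin_cases a <;>
      simp [hτ', hu, hσ, mul_assoc, Equiv.Perm.mul_apply]
  unfold correctOrder4
  simp only [hveq]
  have h12' := Fin.lt_def.mp h12
  have h23' := Fin.lt_def.mp h23
  have h34' := Fin.lt_def.mp h34
  interval_cases ℓ
  · -- rotation only: strictly monotone
    have e : ∀ j : Fin (m+1), (σ j).val = (j.val + k) % (m+1) := by
      intro j
      simp only [hσ, pow_zero, mul_one, hrot]
      rw [Fin.add_def]
      simp [Fin.val_natCast, Nat.mod_eq_of_lt hk]
    have h := core (m+1) k hk j1.val j2.val j3.val j4.val h12' h23' h34' j4.isLt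
    rcases h with ⟨a,b,c⟩ | ⟨a,b,c⟩ | ⟨a,b,c⟩ | ⟨a,b,c⟩
    · exact ⟨0, Or.inl (sm4 _
        (show (σ j1).val < (σ j2).val by rw [e, e]; exact a)
        (show (σ j2).val < (σ j3).val by rw [e, e]; exact b)
        (show (σ j3).val < (σ j4).val by rw [e, e]; exact c))⟩
    · exact ⟨1, Or.inl (sm4 _
        (show (σ j2).val < (σ j3).val by rw [e, e]; exact a)
        (show (σ j3).val < (σ j4).val by rw [e, e]; exact b)
        (show (σ j4).val < (σ j1).val by rw [e, e]; exact c))⟩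
    · exact ⟨2, Or.inl (sm4 _
        (show (σ j3).val < (σ j4).val by rw [e, e]; exact a)
        (show (σ j4).val < (σ j1).val by rw [e, e]; exact b)
        (show (σ j1).val < (σ j2).val by rw [e, e]; exact c))⟩
    · exact ⟨3, Or.inl (sm4 _
        (show (σ j4).val < (σ j1).val by rw [e, e]; exact a)
        (show (σ j1).val < (σ j2).val by rw [e, e]; exact b)
        (show (σ j2).val < (σ j3).val by rw [e, e]; exact c))⟩
  · -- reflection then rotation: strictly antitone
    have e : ∀ j : Fin (m+1), (σ j).val = ((m - j.val) + k) % (m+1) := by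
      intro j
      simp only [hσ, pow_one, Equiv.Perm.mul_apply, Fin.revPerm_apply, hrot]
      rw [Fin.add_def]
      simp only [Fin.val_rev, Fin.val_natCast, Nat.mod_eq_of_lt hk]
      have hj : m + 1 - (j.val + 1) = m - j.val := by omega
      rw [hj]
    have h := core (m+1) k hk (m - j4.val) (m - j3.val) (m - j2.val) (m - j1.val)
      (by omega) (by omega) (by omega) (by omega)
    rcases h with ⟨a,b,c⟩ | ⟨a,b,c⟩ | ⟨a,b,c⟩ | ⟨a,b,c⟩
    · exact ⟨0, Or.inr (sa4 _
        (show (σ j2).val < (σ j1).val by rw [e, e]; exact c)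
        (show (σ j3).val < (σ j2).val by rw [e, e]; exact b)
        (show (σ j4).val < (σ j3).val by rw [e, e]; exact a))⟩
    · exact ⟨3, Or.inr (sa4 _
        (show (σ j1).val < (σ j4).val by rw [e, e]; exact c)
        (show (σ j2).val < (σ j1).val by rw [e, e]; exact b)
        (show (σ j3).val < (σ j2).val by rw [e, e]; exact a))⟩
    · exact ⟨2, Or.inr (sa4 _
        (show (σ j4).val < (σ j3).val by rw [e, e]; exact c)
        (show (σ j1).val < (σ j4).val by rw [e, e]; exact b)
        (show (σ j2).val < (σ j1).val by rw [e, e]; exact a))⟩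
    · exact ⟨1, Or.inr (sa4 _
        (show (σ j3).val < (σ j2).val by rw [e, e]; exact c)
        (show (σ j4).val < (σ j3).val by rw [e, e]; exact b)
        (show (σ j1).val < (σ j4).val by rw [e, e]; exact a))⟩
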